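/- Let N_sub, N_s be positive integers, N = N_sub · N_s, let M = I_{N_sub} ⊗ 1_{N_s} be the mask matrix, and let U_S^V, U_S^K be J × J real matrices. Define the local attention map on J × N real matrices by F(D) = U_S^V D ((U_S^K D)^T D ⊙ M). Let Π be a J × J permutation matrix such that Π U_S^K = U_S^K Π and Π U_S^V = U_S^V Π. Then for every nested permutation matrix Ω = (Π_sub ⊗ I_{N_s}) · diag(Π_1, …, Π_{N_sub}) and every J × N matrix D, F(Πᵀ D Ω) = Πᵀ F(D) Ω. -/

import Mathlib

open Matrix
open scoped Kronecker

noncomputable section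

/-- The permutation matrix of a permutation `σ`: entry `(i, j)` is `1` iff `σ i = j`. -/
def permMatrix {I : Type*} [DecidableEq I] (σ : Equiv.Perm I) : Matrix I I ℝ :=
  Matrix.of fun i j => if σ i = j then 1 else 0

/-- The block-diagonal matrix `diag(B 0, …, B (Nsub - 1))`, indexed by
`Fin Nsub × Fin Ns` (block index first). -/
def blockDiag {Nsub Ns : ℕ} (B : Fin Nsub → Matrix (Fin Ns) (Fin Ns) ℝ) :
    Matrix (Fin Nsub × Fin Ns) (Fin Nsub × Fin Ns) ℝ :=
  Matrix.of fun p q => if p.1 = q.1 then B p.1 p.2 q.2 else 0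

/-- The nested permutation matrix `Ω = (Π_sub ⊗ I_{N_s}) · diag(Π_1, …, Π_{N_sub})`. -/
def nestedPermMatrix {Nsub Ns : ℕ} (σsub : Equiv.Perm (Fin Nsub))
    (σs : Fin Nsub → Equiv.Perm (Fin Ns)) :
    Matrix (Fin Nsub × Fin Ns) (Fin Nsub × Fin Ns) ℝ :=
  (permMatrix σsub ⊗ₖ (1 : Matrix (Fin Ns) (Fin Ns) ℝ)) *
    blockDiag (fun k => permMatrix (σs k))

/-- The mask matrix `M = I_{N_sub} ⊗ 1_{N_s}`, where `1_{N_s}` is the all-ones matrix. -/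
def maskMatrix (Nsub Ns : ℕ) : Matrix (Fin Nsub × Fin Ns) (Fin Nsub × Fin Ns) ℝ :=
  (1 : Matrix (Fin Nsub) (Fin Nsub) ℝ) ⊗ₖ (Matrix.of fun _ _ => (1 : ℝ))

/-- The local attention map `F(D) = U_S^V D ((U_S^K D)ᵀ D ⊙ M)`. -/
def localAtt {J Nsub Ns : ℕ} (USV USK : Matrix (Fin J) (Fin J) ℝ)
    (D : Matrix (Fin J) (Fin Nsub × Fin Ns) ℝ) : Matrix (Fin J) (Fin Nsub × Fin Ns) ℝ :=
  USV * D * (((USK * D)ᵀ * D) ⊙ maskMatrix Nsub Ns)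

section Aux

set_option linter.unusedSectionVars false

variable {I K : Type*} [DecidableEq I] [Fintype I]

lemma permMatrix_mul (σ : Equiv.Perm I) (A : Matrix I K ℝ) :
    permMatrix σ * A = Matrix.of fun i j => A (σ i) j := by
  ext i j
  simp [permMatrix, Matrix.mul_apply, ite_mul]

lemma mul_permMatrix [Fintype K] (σ : Equiv.Perm I) (A : Matrix K I ℝ) :
    A * permMatrix σ = Matrix.of fun i j => A i (σ⁻¹ j) := by
  ext i j
  have h : ∀ k, σ k = j ↔ k = σ⁻¹ j := fun k => by
    constructor <;> rintro rfl <;> simp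
  simp [permMatrix, Matrix.mul_apply, mul_ite, h]

lemma permMatrix_transpose (σ : Equiv.Perm I) :
    (permMatrix σ)ᵀ = permMatrix σ⁻¹ := by
  ext i j
  have h : σ j = i ↔ σ⁻¹ i = j := by constructor <;> rintro rfl <;> simp
  simp [permMatrix, Matrix.transpose_apply, h]

lemma permMatrix_mul_transpose (σ : Equiv.Perm I) :
    permMatrix σ * (permMatrix σ)ᵀ = 1 := by
  rw [permMatrix_transpose, _root_.permMatrix_mul]
  ext i j
  simp [permMatrix, Matrix.one_apply, Equiv.eq_symm_apply]

lemma permMatrix_transpose_mul (σ : Equiv.Perm I) :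
    (permMatrix σ)ᵀ * permMatrix σ = 1 := by
  rw [permMatrix_transpose, _root_.permMatrix_mul]
  ext i j
  simp [permMatrix, Matrix.one_apply]

end Aux

lemma permMatrix_kron_one {Nsub Ns : ℕ} (σsub : Equiv.Perm (Fin Nsub)) :
    (permMatrix σsub ⊗ₖ (1 : Matrix (Fin Ns) (Fin Ns) ℝ))
      = permMatrix (Equiv.prodCongr σsub (Equiv.refl (Fin Ns))) := by
  ext ⟨k, s⟩ ⟨l, t⟩
  simp only [permMatrix, Matrix.kroneckerMap_apply, Matrix.of_apply, Matrix.one_apply,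
    Equiv.prodCongr_apply, Prod.map, Equiv.refl_apply, Prod.mk.injEq]
  split_ifs <;> simp_all

/-- The nested permutation matrix is the permutation matrix of the permutation
`(k, s) ↦ (σsub k, σs (σsub k) s)`. -/
lemma nestedPermMatrix_eq_permMatrix {Nsub Ns : ℕ} (σsub : Equiv.Perm (Fin Nsub))
    (σs : Fin Nsub → Equiv.Perm (Fin Ns)) :
    nestedPermMatrix σsub σs
      = permMatrix (Equiv.prodShear σsub (fun k => σs (σsub k))) := by
  unfold nestedPermMatrix
  rw [permMatrix_kron_one, _root_.permMatrix_mul]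
  ext ⟨k, s⟩ ⟨l, t⟩
  simp only [Matrix.of_apply, _root_.blockDiag, permMatrix, Equiv.prodCongr_apply,
    Prod.map, Equiv.refl_apply, Equiv.prodShear, Equiv.coe_fn_mk, Prod.mk.injEq]
  by_cases h : σsub k = l
  · subst h; simp
  · simp [h]

lemma maskMatrix_apply {Nsub Ns : ℕ} (p q : Fin Nsub × Fin Ns) :
    maskMatrix Nsub Ns p q = if p.1 = q.1 then 1 else 0 := by
  simp [maskMatrix, Matrix.one_apply, Matrix.kroneckerMap_apply, ite_mul]

/-- Conjugation by a nested permutation commutes with masking. -/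
lemma mask_conj {Nsub Ns : ℕ} (σsub : Equiv.Perm (Fin Nsub))
    (σs : Fin Nsub → Equiv.Perm (Fin Ns))
    (A : Matrix (Fin Nsub × Fin Ns) (Fin Nsub × Fin Ns) ℝ) :
    ((nestedPermMatrix σsub σs)ᵀ * A * nestedPermMatrix σsub σs) ⊙ maskMatrix Nsub Ns
      = (nestedPermMatrix σsub σs)ᵀ * (A ⊙ maskMatrix Nsub Ns)
          * nestedPermMatrix σsub σs := by
  rw [nestedPermMatrix_eq_permMatrix, permMatrix_transpose, _root_.permMatrix_mul,
    _root_.mul_permMatrix, _root_.permMatrix_mul, _root_.mul_permMatrix]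
  set τ := Equiv.prodShear σsub (fun k => σs (σsub k)) with hτ
  have h1 : ∀ p : Fin Nsub × Fin Ns, (τ⁻¹ p).1 = σsub⁻¹ p.1 := by
    intro p
    simp [hτ, Equiv.Perm.inv_def, Equiv.prodShear]
  ext p q
  have key : σsub⁻¹ p.1 = σsub⁻¹ q.1 ↔ p.1 = q.1 := by
    constructor
    · intro h; simpa using congrArg σsub h
    · intro h; rw [h]
  simp only [Matrix.hadamard_apply, Matrix.of_apply, maskMatrix_apply, h1, key]

/-- If the weight matrices commute with the permutation matrix `Π`, then the local
attention map satisfies `F(Πᵀ D Ω) = Πᵀ F(D) Ω` for every nested permutation `Ω`. -/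
theorem localAtt_partialNestedTwoPE {J Nsub Ns : ℕ} (hNsub : 0 < Nsub) (hNs : 0 < Ns)
    (USV USK : Matrix (Fin J) (Fin J) ℝ) (π : Equiv.Perm (Fin J))
    (hK : permMatrix π * USK = USK * permMatrix π)
    (hV : permMatrix π * USV = USV * permMatrix π)
    (σsub : Equiv.Perm (Fin Nsub)) (σs : Fin Nsub → Equiv.Perm (Fin Ns))
    (D : Matrix (Fin J) (Fin Nsub × Fin Ns) ℝ) :
    localAtt USV USK ((permMatrix π)ᵀ * D * nestedPermMatrix σsub σs)
      = (permMatrix π)ᵀ * localAtt USV USK D * nestedPermMatrix σsub σs := by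
  set P := permMatrix π with hP
  set Ω := nestedPermMatrix σsub σs with hΩ
  have hΩΩt : Ω * Ωᵀ = 1 := by
    rw [hΩ, nestedPermMatrix_eq_permMatrix]; exact permMatrix_mul_transpose _
  have hPPt : P * Pᵀ = 1 := permMatrix_mul_transpose π
  have hPtP : Pᵀ * P = 1 := permMatrix_transpose_mul π
  have hKt : USK * Pᵀ = Pᵀ * USK := by
    have h1 : P * (USK * Pᵀ) = USK := by
      rw [← Matrix.mul_assoc, hK, Matrix.mul_assoc, hPPt, Matrix.mul_one]
    have h2 : Pᵀ * (P * (USK * Pᵀ)) = USK * Pᵀ := by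
      rw [← Matrix.mul_assoc, hPtP, Matrix.one_mul]
    rw [← h2, h1]
  have hVt : USV * Pᵀ = Pᵀ * USV := by
    have h1 : P * (USV * Pᵀ) = USV := by
      rw [← Matrix.mul_assoc, hV, Matrix.mul_assoc, hPPt, Matrix.mul_one]
    have h2 : Pᵀ * (P * (USV * Pᵀ)) = USV * Pᵀ := by
      rw [← Matrix.mul_assoc, hPtP, Matrix.one_mul]
    rw [← h2, h1]
  have hUK : USK * (Pᵀ * D * Ω) = Pᵀ * (USK * D) * Ω := by
    rw [← Matrix.mul_assoc, ← Matrix.mul_assoc, hKt, Matrix.mul_assoc Pᵀ USK D]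
  have hinner : (USK * (Pᵀ * D * Ω))ᵀ * (Pᵀ * D * Ω)
      = Ωᵀ * ((USK * D)ᵀ * D) * Ω := by
    rw [hUK]
    simp only [Matrix.transpose_mul, Matrix.transpose_transpose, Matrix.mul_assoc]
    rw [← Matrix.mul_assoc P Pᵀ, hPPt, Matrix.one_mul]
  unfold localAtt
  rw [hinner, mask_conj]
  simp only [Matrix.mul_assoc]
  rw [← Matrix.mul_assoc Ω Ωᵀ, hΩΩt, Matrix.one_mul, ← Matrix.mul_assoc USV Pᵀ, hVt,
    Matrix.mul_assoc]
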